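/- Let $(A,\mathfrak{m})$ be a local ring and $M$ a finitely presented $A$-module that is not free. Then there exists a local ring homomorphism $A \to B$, an element $b \in B$ with $b \neq 0$ and $b^2 = 0$, and integers $n \geq 0$, $m \geq 1$, such that $M \otimes_A B \cong B^n \oplus (B/(b))^m$ as $B$-modules. -/

import Mathlib

open TensorProduct

/-- Splitting a Pi type over a sum type, linearly. -/
def sumPiLequiv (R : Type*) [Semiring R] {ι ι' : Type*} (C : ι ⊕ ι' → Type*)
    [∀ i, AddCommMonoid (C i)] [∀ i, Module R (C i)] :
    (∀ i, C i) ≃ₗ[R] (∀ a, C (Sum.inl a)) × (∀ b, C (Sum.inr b)) where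
  toFun f := (fun a => f (Sum.inl a), fun b => f (Sum.inr b))
  invFun p i := Sum.rec (fun a => p.1 a) (fun b => p.2 b) i
  map_add' f g := rfl
  map_smul' c f := rfl
  left_inv f := by funext i; cases i <;> rfl
  right_inv p := rfl



lemma auxZorn (A : Type) [CommRing A] [IsLocalRing A] (I : Ideal A) (x : A)
    (hxI : x ∈ I) (hxmI : x ∉ IsLocalRing.maximalIdeal A • I) :
    ∃ J : Ideal A, (IsLocalRing.maximalIdeal A • I ≤ J ∧ J ≤ I) ∧
      (∀ y ∈ I, ∃ a : A, y - a * x ∈ J) ∧ x ∉ J := by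
  set 𝔪 := IsLocalRing.maximalIdeal A
  set S : Set (Ideal A) := {J | 𝔪 • I ≤ J ∧ J ≤ I ∧ x ∉ J} with hS
  have hub : ∀ c ⊆ S, IsChain (· ≤ ·) c → ∀ y ∈ c, ∃ ub ∈ S, ∀ z ∈ c, z ≤ ub := by
    intro c hcS hchain y hy
    refine ⟨sSup c, ⟨le_trans (hcS hy).1 (le_sSup hy), sSup_le fun z hz => (hcS hz).2.1, ?_⟩,
      fun z hz => le_sSup hz⟩
    rw [Submodule.mem_sSup_of_directed ⟨y, hy⟩ hchain.directedOn]
    rintro ⟨z, hz, hxz⟩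
    exact (hcS hz).2.2 hxz
  obtain ⟨J, -, hJmax⟩ := zorn_le_nonempty₀ S hub (𝔪 • I)
    ⟨le_rfl, Submodule.smul_le_right, hxmI⟩
  obtain ⟨hJ1, hJ2, hJ3⟩ := hJmax.prop
  refine ⟨J, ⟨hJ1, hJ2⟩, ?_, hJ3⟩
  intro y hy
  by_cases hx' : x ∈ J ⊔ Ideal.span {y}
  · obtain ⟨j, hj, z, hz, hxjz⟩ := Submodule.mem_sup.mp hx'
    obtain ⟨a, rfl⟩ := Ideal.mem_span_singleton'.mp hz
    by_cases ha : a ∈ 𝔪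
    · exfalso
      apply hJ3
      have : a * y ∈ 𝔪 • I := Submodule.smul_mem_smul ha hy
      rw [← hxjz]
      exact J.add_mem hj (hJ1 this)
    · have haU : IsUnit a := by
        by_contra h
        exact ha (IsLocalRing.mem_maximalIdeal a |>.mpr h)
      obtain ⟨u, rfl⟩ := haU
      refine ⟨(↑u⁻¹ : A), ?_⟩
      have : y - (↑u⁻¹ : A) * x = -((↑u⁻¹ : A) * j) := by
        have hx2 : x = j + (u : A) * y := hxjz.symm
        rw [hx2]
        have h3 : y * (↑u⁻¹ : A) * (u : A) = y := by
          rw [mul_assoc]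
          simp [Units.inv_mul]
        ring_nf
        rw [h3]
        ring
      rw [this]
      exact J.neg_mem (Ideal.mul_mem_left _ _ hj)
  · have hJ' : J ⊔ Ideal.span {y} ∈ S :=
      ⟨le_trans hJ1 le_sup_left, sup_le hJ2 ((Ideal.span_singleton_le_iff_mem I).mpr hy), hx'⟩
    have := hJmax.2 hJ' le_sup_left
    refine ⟨0, ?_⟩
    have hyJ : y ∈ J := this (Submodule.mem_sup_right (Ideal.subset_span rfl))
    simpa using hyJ

lemma auxLocHom (A : Type) [CommRing A] [IsLocalRing A] (J : Ideal A)
    (hJm : J ≤ IsLocalRing.maximalIdeal A) [Nontrivial (A ⧸ J)] :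
    IsLocalHom (algebraMap A (A ⧸ J)) := by
  constructor
  intro a ha
  by_contra han
  have ham : a ∈ IsLocalRing.maximalIdeal A := (IsLocalRing.mem_maximalIdeal a).mpr han
  rw [Ideal.Quotient.algebraMap_eq] at ha
  obtain ⟨c, hc⟩ := Ideal.Quotient.mk_surjective (↑(ha.unit⁻¹) : A ⧸ J)
  have h1 : Ideal.Quotient.mk J (a * c) = 1 := by
    rw [map_mul, hc]
    exact ha.mul_val_inv ▸ rfl
  have h2 : a * c - 1 ∈ J := by
    rw [← Ideal.Quotient.eq]
    simpa using h1
  have : (1 : A) ∈ IsLocalRing.maximalIdeal A := by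
    have : (1 : A) = a * c - (a * c - 1) := by ring
    rw [this]
    exact Submodule.sub_mem _ (Ideal.mul_mem_right _ _ ham) (hJm h2)
  exact (IsLocalRing.maximalIdeal.isMaximal A).ne_top ((Ideal.eq_top_iff_one _).mpr this)

lemma auxTensor {A : Type} [CommRing A] {B : Type} [CommRing B] [Algebra A B]
    {M : Type} [AddCommGroup M] [Module A M] {r s : ℕ}
    (π : (Fin r → A) →ₗ[A] M) (hπ : Function.Surjective π)
    (k : Fin s → (Fin r → A)) (hk : Submodule.span A (Set.range k) = LinearMap.ker π) :
    Nonempty ((B ⊗[A] M) ≃ₗ[B]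
      ((Fin r → B) ⧸ Submodule.span B (Set.range fun t => fun i => algebraMap A B (k t i)))) := by
  classical
  set φ : (Fin s → A) →ₗ[A] (Fin r → A) := Fintype.linearCombination A k with hφ
  have hexact : Function.Exact φ π := by
    rw [LinearMap.exact_iff, ← hk, hφ, Fintype.range_linearCombination]
  have hexB : Function.Exact (LinearMap.lTensor B φ) (LinearMap.lTensor B π) :=
    lTensor_exact B hexact hπ
  have hπB : Function.Surjective ⇑(π.baseChange B) := by
    rw [LinearMap.baseChange_eq_ltensor]
    exact LinearMap.lTensor_surjective B hπ
  set ε := TensorProduct.piScalarRight A B B (Fin r) with hε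
  -- images of kernel elements land in the span
  have hker : ∀ y ∈ LinearMap.ker π,
      (fun i => algebraMap A B (y i)) ∈
        Submodule.span B (Set.range fun t => fun i => algebraMap A B (k t i)) := by
    intro y hy
    rw [← hk] at hy
    induction hy using Submodule.span_induction with
    | mem z hz =>
        obtain ⟨t, rfl⟩ := hz
        exact Submodule.subset_span ⟨t, rfl⟩
    | zero =>
        have : (fun i => algebraMap A B ((0 : Fin r → A) i)) = 0 := by funext i; simp
        rw [this]; exact Submodule.zero_mem _
    | add y z _ _ hy hz =>
        have : (fun i => algebraMap A B ((y + z) i)) =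
            (fun i => algebraMap A B (y i)) + (fun i => algebraMap A B (z i)) := by
          funext i; simp
        rw [this]; exact Submodule.add_mem _ hy hz
    | smul a y _ hy =>
        have : (fun i => algebraMap A B ((a • y) i)) =
            algebraMap A B a • (fun i => algebraMap A B (y i)) := by
          funext i; simp [Algebra.smul_def]
        rw [this]; exact Submodule.smul_mem _ _ hy
  have hNNspan : Submodule.map (ε.toLinearMap) (LinearMap.ker (π.baseChange B)) =
      Submodule.span B (Set.range fun t => fun i => algebraMap A B (k t i)) := by
    apply le_antisymm
    · rintro _ ⟨z, hz, rfl⟩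
      have hz' : LinearMap.lTensor B π z = 0 := by
        rw [← LinearMap.baseChange_eq_ltensor]; exact hz
      obtain ⟨w, rfl⟩ := (hexB z).mp hz'
      clear hz hz'
      induction w using TensorProduct.induction_on with
      | zero =>
          rw [map_zero, map_zero]
          exact Submodule.zero_mem _
      | tmul c a =>
          have h1 : LinearMap.lTensor B φ (c ⊗ₜ[A] a) = c ⊗ₜ[A] (φ a) := rfl
          have h2 : ε.toLinearMap (c ⊗ₜ[A] (φ a)) = c • (fun i => algebraMap A B (φ a i)) := by
            rw [hε]
            simp only [LinearEquiv.coe_coe, TensorProduct.piScalarRight_apply,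
              TensorProduct.piScalarRightHom_tmul]
            funext i
            simp [Algebra.smul_def, mul_comm]
          rw [h1, h2]
          refine Submodule.smul_mem _ _ (hker _ ?_)
          have hra : φ a ∈ LinearMap.range φ := ⟨a, rfl⟩
          rwa [hφ, Fintype.range_linearCombination, hk] at hra
      | add z1 z2 h1 h2 =>
          rw [map_add, map_add]
          exact Submodule.add_mem _ h1 h2
    · rw [Submodule.span_le]
      rintro _ ⟨t, rfl⟩
      have hmem : (1 : B) ⊗ₜ[A] (k t) ∈ LinearMap.ker (π.baseChange B) := by
        rw [LinearMap.mem_ker, LinearMap.baseChange_tmul]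
        have : π (k t) = 0 := by
          have hmem2 : k t ∈ Submodule.span A (Set.range k) :=
            Submodule.subset_span ⟨t, rfl⟩
          rw [hk] at hmem2
          exact LinearMap.mem_ker.mp hmem2
        rw [this, TensorProduct.tmul_zero]
      refine ⟨(1 : B) ⊗ₜ[A] (k t), hmem, ?_⟩
      rw [hε]
      simp only [LinearEquiv.coe_coe, TensorProduct.piScalarRight_apply,
        TensorProduct.piScalarRightHom_tmul]
      funext i
      rw [Algebra.algebraMap_eq_smul_one]
  exact ⟨(LinearMap.quotKerEquivOfSurjective (π.baseChange B) hπB).symm.trans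
    (Submodule.Quotient.equiv _ _ ε hNNspan)⟩

lemma auxQuot {B : Type} [CommRing B] [IsLocalRing B] (b : B)
    (hbm : ∀ c : B, ¬ IsUnit c → b * c = 0) {r s : ℕ} (u : Fin s → (Fin r → B))
    (hune : ∃ t, b • u t ≠ 0) :
    ∃ n m : ℕ, 1 ≤ m ∧
      Nonempty ((((Fin r → B) ⧸ Submodule.span B (Set.range fun t => b • u t))) ≃ₗ[B]
        ((Fin n → B) × (Fin m → B ⧸ Ideal.span {b}))) := by
  classical
  set κ := IsLocalRing.ResidueField B with hκdef
  set res := IsLocalRing.residue B with hresdef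
  have hbker : ∀ c : B, res c = 0 → b * c = 0 := by
    intro c hc
    refine hbm c fun hu => ?_
    have : c ∈ IsLocalRing.maximalIdeal B := Ideal.Quotient.eq_zero_iff_mem.mp hc
    exact (IsLocalRing.mem_maximalIdeal c).mp this hu
  have hL1 : ∀ y z : Fin r → B, (∀ i, res (y i) = res (z i)) → b • y = b • z := by
    intro y z h
    funext i
    have h0 : b * (y i - z i) = 0 := hbker _ (by rw [map_sub, h i, sub_self])
    have : b * y i - b * z i = 0 := by rw [← mul_sub]; exact h0
    simpa [sub_eq_zero] using this
  -- the subspace spanned by the residues of the `u t`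
  set W : Submodule κ (Fin r → κ) :=
    Submodule.span κ (Set.range fun t => fun i => res (u t i)) with hW
  set m := Module.finrank κ W with hm
  obtain ⟨W', hW'⟩ := Submodule.exists_isCompl W
  set n := Module.finrank κ W' with hn
  have hm1 : 1 ≤ m := by
    obtain ⟨t0, ht0⟩ := hune
    have hρ : (fun i => res (u t0 i)) ≠ (0 : Fin r → κ) := by
      intro h0
      apply ht0
      funext i
      have : res (u t0 i) = 0 := congrFun h0 i
      have := hbker _ this
      simpa [mul_comm] using this
    have hWne : W ≠ ⊥ := by
      intro h
      apply hρ
      have : (fun i => res (u t0 i)) ∈ W := Submodule.subset_span ⟨t0, rfl⟩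
      rw [h] at this
      simpa using this
    rw [Nat.one_le_iff_ne_zero, hm]
    intro h0
    exact hWne (Submodule.finrank_eq_zero.mp h0)
  have hnm : n + m = r := by
    have := Submodule.finrank_add_eq_of_isCompl hW'.symm
    rw [Module.finrank_fin_fun] at this
    exact this
  -- a basis adapted to W
  set bW : Module.Basis (Fin m) κ W := Module.finBasis κ W with hbW
  set bW' : Module.Basis (Fin n) κ W' := Module.finBasis κ W' with hbW'
  set w : Module.Basis (Fin n ⊕ Fin m) κ (Fin r → κ) :=
    (bW'.prod bW).map (Submodule.prodEquivOfIsCompl W' W hW'.symm) with hw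
  have hwinr : ∀ j, w (Sum.inr j) = ((bW j : Fin r → κ)) := by
    intro j
    rw [hw, Module.Basis.map_apply, Module.Basis.prod_apply]
    simp [Submodule.coe_prodEquivOfIsCompl']
  have hWspan : W = Submodule.span κ (Set.range fun j => w (Sum.inr j)) := by
    have h1 := congrArg (Submodule.map W.subtype) bW.span_eq
    rw [Submodule.map_span, Submodule.map_top, Submodule.range_subtype] at h1
    rw [← h1]
    congr 1
    rw [← Set.range_comp]
    exact congrArg Set.range (funext fun j => (hwinr j).symm)
  -- lift the basis to B
  choose v hv using fun (j : Fin n ⊕ Fin m) (i : Fin r) => IsLocalRing.residue_surjective (w j i)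
  -- v lifts w; build the base-change basis and show v spans
  set ε' := TensorProduct.piScalarRight B κ κ (Fin r) with hε'
  have hbasκ : ∀ j, (1 : κ) ⊗ₜ[B] v j = (w.map ε'.symm) j := by
    intro j
    rw [Module.Basis.map_apply]
    symm
    rw [LinearEquiv.symm_apply_eq, hε']
    simp only [TensorProduct.piScalarRight_apply, TensorProduct.piScalarRightHom_tmul]
    funext i
    rw [← hv j i, ← IsLocalRing.ResidueField.algebraMap_eq, Algebra.algebraMap_eq_smul_one]
  have hspan : Submodule.span B (Set.range v) = ⊤ :=
    IsLocalRing.span_eq_top_of_tmul_eq_basis v (w.map ε'.symm) hbasκ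
  set f0 : ((Fin n ⊕ Fin m) → B) →ₗ[B] (Fin r → B) := Fintype.linearCombination B v with hf0
  have hf0surj : Function.Surjective ⇑f0 := by
    rw [← LinearMap.range_eq_top, hf0, Fintype.range_linearCombination, hspan]
  have hf0inj : Function.Injective ⇑f0 := by
    set σ : (Fin n ⊕ Fin m) ≃ Fin r := finSumFinEquiv.trans (finCongr hnm) with hσ
    set τ : (Fin r → B) ≃ₗ[B] ((Fin n ⊕ Fin m) → B) := LinearEquiv.funCongrLeft B B σ with hτ
    have hg : Function.Surjective ⇑(f0 ∘ₗ τ.toLinearMap) := by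
      intro y
      obtain ⟨z, hz⟩ := hf0surj y
      exact ⟨τ.symm z, by simp [hz]⟩
    have hginj := OrzechProperty.injective_of_surjective_endomorphism _ hg
    intro a a' h
    have h2 : (f0 ∘ₗ τ.toLinearMap) (τ.symm a) = (f0 ∘ₗ τ.toLinearMap) (τ.symm a') := by
      simp [LinearMap.comp_apply, h]
    have := hginj h2
    exact τ.symm.injective this
  set e : ((Fin n ⊕ Fin m) → B) ≃ₗ[B] (Fin r → B) :=
    LinearEquiv.ofBijective f0 ⟨hf0inj, hf0surj⟩ with he
  have hesingle : ∀ j, e (Pi.single j (1 : B)) = v j := by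
    intro j
    show f0 (Pi.single j (1 : B)) = v j
    rw [hf0, Fintype.linearCombination_apply]
    rw [Finset.sum_eq_single j (fun i _ hij => by rw [Pi.single_eq_of_ne hij, zero_smul])
      (fun h => absurd (Finset.mem_univ j) h)]
    rw [Pi.single_eq_same, one_smul]
  -- the key span-comparison lemma
  have key : ∀ {p q : ℕ} (c : Fin p → Fin r → B) (d : Fin q → Fin r → B),
      (∀ j, (fun i => res (d j i)) ∈
        Submodule.span κ (Set.range fun t => fun i => res (c t i))) →
      Submodule.span B (Set.range fun j => b • d j) ≤
        Submodule.span B (Set.range fun t => b • c t) := by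
    intro p q c d hmem
    rw [Submodule.span_le]
    rintro _ ⟨j, rfl⟩
    show b • d j ∈ Submodule.span B (Set.range fun t => b • c t)
    obtain ⟨γ, hγ⟩ := (Submodule.mem_span_range_iff_exists_fun κ).mp (hmem j)
    choose g hg using fun t => IsLocalRing.residue_surjective (γ t)
    have hz : b • d j = b • (∑ t, g t • c t) := by
      refine (hL1 _ _ fun i => ?_).symm
      have h3 : (∑ t, g t • c t) i = ∑ t, g t * c t i := by
        rw [Finset.sum_apply]
        exact Finset.sum_congr rfl fun t _ => rfl
      rw [h3, map_sum]
      have h4 : ∀ t, res (g t * c t i) = γ t * res (c t i) := by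
        intro t
        rw [map_mul, hg]
      rw [Finset.sum_congr rfl fun t _ => h4 t]
      have h5 := congrFun hγ i
      rw [Finset.sum_apply] at h5
      simpa using h5
    rw [hz, Finset.smul_sum]
    refine Submodule.sum_mem _ fun t _ => ?_
    rw [smul_comm]
    exact Submodule.smul_mem _ _ (Submodule.subset_span ⟨t, rfl⟩)
  -- identify the span of b•u with the span of b•v(inr ·)
  have hS12 : Submodule.span B (Set.range fun t => b • u t) =
      Submodule.span B (Set.range fun j : Fin m => b • v (Sum.inr j)) := by
    apply le_antisymm
    · refine key _ _ fun t => ?_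
      have h1 : (fun i => res (u t i)) ∈ W := Submodule.subset_span ⟨t, rfl⟩
      rw [hWspan] at h1
      have heq : (fun j : Fin m => fun i => res (v (Sum.inr j) i)) =
          (fun j : Fin m => w (Sum.inr j)) :=
        funext fun j => funext fun i => hv _ i
      rw [heq]
      exact h1
    · refine key _ _ fun j => ?_
      have h1 : (fun i => res (v (Sum.inr j) i)) = w (Sum.inr j) := by
        funext i; rw [hv]
      rw [h1]
      have h2 : w (Sum.inr j) ∈ W := by
        rw [hwinr]
        exact (bW j).2
      rwa [hW] at h2
  set P : Submodule B ((Fin n ⊕ Fin m) → B) :=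
    Submodule.span B
      (Set.range fun j : Fin m => b • (Pi.single (Sum.inr j) (1:B) : (Fin n ⊕ Fin m) → B)) with hP
  have hmapP : Submodule.map (e : ((Fin n ⊕ Fin m) → B) →ₗ[B] (Fin r → B)) P =
      Submodule.span B (Set.range fun t => b • u t) := by
    rw [hP, Submodule.map_span, ← Set.range_comp, hS12]
    refine congrArg (Submodule.span B) (congrArg Set.range (funext fun j => ?_))
    simp only [Function.comp_apply, LinearEquiv.coe_coe, map_smul, hesingle]
  have equivQ : (((Fin n ⊕ Fin m) → B) ⧸ P) ≃ₗ[B]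
      ((Fin r → B) ⧸ Submodule.span B (Set.range fun t => b • u t)) :=
    Submodule.Quotient.equiv P _ e hmapP
  set σI : (Fin n ⊕ Fin m) → Submodule B B :=
    Sum.elim (fun _ => (⊥ : Submodule B B)) (fun _ => (Ideal.span {b} : Submodule B B)) with hσI
  have hPpi : P = Submodule.pi Set.univ σI := by
    apply le_antisymm
    · rw [hP, Submodule.span_le]
      rintro _ ⟨j, rfl⟩
      intro i _
      rcases i with a | j'
      · show (b • (Pi.single (Sum.inr j) (1:B) : (Fin n ⊕ Fin m) → B)) (Sum.inl a) ∈ (⊥ : Submodule B B)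
        simp [Pi.single_eq_of_ne]
      · show (b • (Pi.single (Sum.inr j) (1:B) : (Fin n ⊕ Fin m) → B)) (Sum.inr j') ∈ Ideal.span {b}
        by_cases hjj : j' = j
        · subst hjj
          simp only [Pi.smul_apply, Pi.single_eq_same, smul_eq_mul, mul_one]
          exact Ideal.mem_span_singleton_self b
        · have : (Sum.inr j' : Fin n ⊕ Fin m) ≠ Sum.inr j := fun h => hjj (Sum.inr.inj h)
          simp only [Pi.smul_apply, Pi.single_eq_of_ne this, smul_eq_mul, mul_zero]
          exact Ideal.zero_mem _
    · intro c hc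
      have hcl : ∀ a, c (Sum.inl a) = 0 := fun a => by
        have := hc (Sum.inl a) (Set.mem_univ _)
        simpa [hσI] using this
      have hcr : ∀ j, ∃ d, d * b = c (Sum.inr j) := fun j =>
        Ideal.mem_span_singleton'.mp (by simpa [hσI] using hc (Sum.inr j) (Set.mem_univ _))
      choose d hd using hcr
      have hcsum : c = ∑ j : Fin m, d j • (b • (Pi.single (Sum.inr j) (1:B) : (Fin n ⊕ Fin m) → B)) := by
        have h1 : ∀ j : Fin m, d j • (b • (Pi.single (Sum.inr j) (1:B) : (Fin n ⊕ Fin m) → B)) =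
            (Pi.single (Sum.inr j) (c (Sum.inr j)) : (Fin n ⊕ Fin m) → B) := by
          intro j
          rw [← hd j]
          funext i
          rcases eq_or_ne i (Sum.inr j) with h | h
          · subst h
            simp [mul_comm, mul_assoc]
          · simp [Pi.single_eq_of_ne h]
        rw [Finset.sum_congr rfl fun j _ => h1 j]
        have h2 := Finset.univ_sum_single c
        conv_lhs => rw [← h2]
        rw [Fintype.sum_sum_type]
        have h3 : (∑ a : Fin n, (Pi.single (Sum.inl a) (c (Sum.inl a)) : (Fin n ⊕ Fin m) → B)) = 0 :=
          Finset.sum_eq_zero fun a _ => by rw [hcl a]; exact Pi.single_zero _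
        rw [h3, zero_add]
      rw [hcsum]
      exact Submodule.sum_mem _ fun j _ =>
        Submodule.smul_mem _ _ (Submodule.subset_span ⟨j, rfl⟩)
  have eqPi := Submodule.quotEquivOfEq P (Submodule.pi Set.univ σI) hPpi
  have eqQP := Submodule.quotientPi σI
  have eqL : (∀ a : Fin n, B ⧸ σI (Sum.inl a)) ≃ₗ[B] (Fin n → B) :=
    LinearEquiv.piCongrRight fun a => Submodule.quotEquivOfEqBot _ rfl
  have eqR : (∀ j : Fin m, B ⧸ σI (Sum.inr j)) ≃ₗ[B] (Fin m → B ⧸ Ideal.span {b}) :=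
    LinearEquiv.piCongrRight fun j => Submodule.quotEquivOfEq _ _ rfl
  exact ⟨n, m, hm1, ⟨equivQ.symm.trans (eqPi.trans (eqQP.trans
    ((sumPiLequiv B (fun i => B ⧸ σI i)).trans (LinearEquiv.prodCongr eqL eqR))))⟩⟩


/-- Let `(A, 𝔪)` be a local ring and `M` a finitely presented `A`-module that is not free.
Then there is a local homomorphism `A → B`, an element `b ∈ B` with `b ≠ 0`, `b ^ 2 = 0`,
and integers `n ≥ 0`, `m ≥ 1` with `M ⊗[A] B ≅ B ^ n ⊕ (B ⧸ (b)) ^ m` as `B`-modules. -/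
theorem stmt0 (A : Type) [CommRing A] [IsLocalRing A]
    (M : Type) [AddCommGroup M] [Module A M] [Module.FinitePresentation A M]
    (hMfree : ¬ Module.Free A M) :
    ∃ (B : Type) (_ : CommRing B) (_ : IsLocalRing B) (_ : Algebra A B),
      IsLocalHom (algebraMap A B) ∧
      ∃ b : B, b ≠ 0 ∧ b ^ 2 = 0 ∧
        ∃ n m : ℕ, 1 ≤ m ∧
          Nonempty ((B ⊗[A] M) ≃ₗ[B]
            ((Fin n → B) × (Fin m → B ⧸ Ideal.span {b}))) := by
  classical
  set kA := IsLocalRing.ResidueField A with hkA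
  set 𝔪 := IsLocalRing.maximalIdeal A with h𝔪
  set r := Module.finrank kA (kA ⊗[A] M) with hr
  let bas : Module.Basis (Fin r) kA (kA ⊗[A] M) := Module.finBasis kA (kA ⊗[A] M)
  have hsurj1 : Function.Surjective ⇑(TensorProduct.mk A kA M 1) :=
    TensorProduct.mk_surjective A M kA Ideal.Quotient.mk_surjective
  choose f hf using fun i => hsurj1 (bas i)
  set π : (Fin r → A) →ₗ[A] M := Fintype.linearCombination A f with hπdef
  have hπ : Function.Surjective π := by
    rw [← LinearMap.range_eq_top, hπdef, Fintype.range_linearCombination]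
    exact IsLocalRing.span_eq_top_of_tmul_eq_basis f bas hf
  -- the kernel of the minimal presentation has coordinates in 𝔪
  have hK : ∀ v ∈ LinearMap.ker π, ∀ i, v i ∈ 𝔪 := by
    intro v hv i
    have h0 : (TensorProduct.mk A kA M 1) (π v) = 0 := by
      rw [LinearMap.mem_ker.mp hv, map_zero]
    have hπv : π v = ∑ j, v j • f j := Fintype.linearCombination_apply A f v
    have hexp : ∑ j, (IsLocalRing.residue A (v j)) • bas j = 0 := by
      rw [← h0, hπv, map_sum]
      refine Finset.sum_congr rfl fun j _ => ?_
      rw [map_smul, hf j]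
      rw [← algebraMap_smul kA (v j) (bas j), IsLocalRing.ResidueField.algebraMap_eq]
    have hres := Fintype.linearIndependent_iff.mp bas.linearIndependent
      (fun j => IsLocalRing.residue A (v j)) hexp i
    exact Ideal.Quotient.eq_zero_iff_mem.mp hres
  have hKne : LinearMap.ker π ≠ ⊥ := by
    intro h
    exact hMfree (Module.Free.of_equiv
      (LinearEquiv.ofBijective π ⟨LinearMap.ker_eq_bot.mp h, hπ⟩))
  obtain ⟨s, k, hk⟩ := Submodule.fg_iff_exists_fin_generating_family.mp
    (Module.FinitePresentation.fg_ker π hπ)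
  have hkK : ∀ t, k t ∈ LinearMap.ker π := fun t =>
    hk ▸ Submodule.subset_span ⟨t, rfl⟩
  -- the ideal of coordinates of relations
  set I : Ideal A := Ideal.span (Set.range fun p : Fin s × Fin r => k p.1 p.2) with hI
  have hIfg : I.FG := Submodule.fg_span (Set.finite_range _)
  have hkI : ∀ t i, k t i ∈ I := fun t i => Submodule.subset_span ⟨(t, i), rfl⟩
  have hIm : I ≤ 𝔪 := by
    rw [hI, Ideal.span_le]
    rintro a ⟨⟨t, i⟩, rfl⟩
    exact hK _ (hkK t) i
  -- find x ∈ I \ 𝔪I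
  have hImI : ¬ I ≤ 𝔪 • I := by
    intro hle
    have hI0 : I = ⊥ := Submodule.eq_bot_of_le_smul_of_le_jacobson_bot 𝔪 I hIfg hle
      (by rw [h𝔪, IsLocalRing.jacobson_eq_maximalIdeal ⊥ bot_ne_top])
    apply hKne
    rw [← hk, Submodule.span_eq_bot]
    rintro _ ⟨t, rfl⟩
    funext i
    have := hkI t i
    rw [hI0] at this
    simpa using this
  obtain ⟨x, hxI, hxmI⟩ := SetLike.not_le_iff_exists.mp hImI
  -- Zorn: J maximal with 𝔪I ≤ J ≤ I and x ∉ J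
  obtain ⟨J, hJ, hdiv, hxJ⟩ := auxZorn A I x hxI hxmI
  have hJm : J ≤ 𝔪 := hJ.2.trans hIm
  have hJtop : J ≠ ⊤ := fun h => hxJ (h.symm ▸ Submodule.mem_top)
  haveI : Nontrivial (A ⧸ J) := Ideal.Quotient.nontrivial_iff.mpr hJtop
  haveI hBloc : IsLocalRing (A ⧸ J) :=
    IsLocalRing.of_surjective' (Ideal.Quotient.mk J) Ideal.Quotient.mk_surjective
  have hlochom : IsLocalHom (algebraMap A (A ⧸ J)) := auxLocHom A J hJm
  set b : A ⧸ J := Ideal.Quotient.mk J x with hb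
  have hb0 : b ≠ 0 := fun h => hxJ (Ideal.Quotient.eq_zero_iff_mem.mp h)
  have hb2 : b ^ 2 = 0 := by
    rw [pow_two, hb, ← map_mul, Ideal.Quotient.eq_zero_iff_mem]
    exact hJ.1 (Submodule.smul_mem_smul (hIm hxI) hxI)
  -- b kills nonunits
  have hbm : ∀ c : A ⧸ J, ¬ IsUnit c → b * c = 0 := by
    intro c hc
    obtain ⟨c0, rfl⟩ := Ideal.Quotient.mk_surjective c
    have hc0 : c0 ∈ 𝔪 := by
      rw [h𝔪, IsLocalRing.mem_maximalIdeal]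
      intro hu
      exact hc (hu.map (Ideal.Quotient.mk J))
    rw [hb, ← map_mul, Ideal.Quotient.eq_zero_iff_mem]
    have : x * c0 = c0 * x := mul_comm _ _
    rw [this]
    exact hJ.1 (Submodule.smul_mem_smul hc0 hxI)
  -- divide the relations by b
  choose a ha using fun (t : Fin s) (i : Fin r) => hdiv (k t i) (hkI t i)
  set u : Fin s → (Fin r → A ⧸ J) := fun t i => Ideal.Quotient.mk J (a t i) with hu
  have hgu : (fun t => fun i => algebraMap A (A ⧸ J) (k t i)) = fun t => b • u t := by
    funext t i
    rw [Ideal.Quotient.algebraMap_eq]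
    have h1 : Ideal.Quotient.mk J (k t i) = Ideal.Quotient.mk J (a t i * x) :=
      Ideal.Quotient.eq.mpr (ha t i)
    rw [h1, map_mul]
    show _ = b * u t i
    rw [hu, hb, mul_comm]
  have hune : ∃ t, b • u t ≠ 0 := by
    by_contra h
    push_neg at h
    apply hxJ
    have hIJ : I ≤ J := by
      rw [hI, Ideal.span_le]
      rintro _ ⟨⟨t, i⟩, rfl⟩
      have h1 : (fun i => algebraMap A (A ⧸ J) (k t i)) = fun i => ((0 : Fin r → A ⧸ J) i) := by
        rw [congrFun hgu t, h t]
      have h2 : algebraMap A (A ⧸ J) (k t i) = 0 := congrFun h1 i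
      rw [Ideal.Quotient.algebraMap_eq] at h2
      exact Ideal.Quotient.eq_zero_iff_mem.mp h2
    exact hIJ hxI
  obtain ⟨E1⟩ := auxTensor (B := A ⧸ J) π hπ k hk
  have hspaneq : Submodule.span (A ⧸ J)
        (Set.range fun t => fun i => algebraMap A (A ⧸ J) (k t i)) =
      Submodule.span (A ⧸ J) (Set.range fun t => b • u t) := by rw [hgu]
  obtain ⟨n, m, hm1, ⟨E2⟩⟩ := auxQuot b hbm u hune
  exact ⟨A ⧸ J, inferInstance, hBloc, inferInstance, hlochom, b, hb0, hb2, n, m, hm1,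
    ⟨(E1.trans (Submodule.quotEquivOfEq _ _ hspaneq)).trans E2⟩⟩
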